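/- Let k ≥ 1 be an integer and let s ≥ 1 be a real number. Then for all w, v ∈ ℝ^k, | |w|^{s−1} w − |v|^{s−1} v | ≥ 2^{−s} |w − v|^s, where for w = 0 the expression |w|^{s−1}w is interpreted as 0. -/

import Mathlib

open Real

/-- Lower bound for the increment of the power map `α(w) = |w|^{s−1} w` (with `α(0) = 0`):
`||w|^{s−1}w − |v|^{s−1}v| ≥ 2^{−s}|w−v|^s` for `s ≥ 1`. -/
theorem power_map_increment_lower_bound (k : ℕ) (hk : 1 ≤ k) (s : ℝ) (hs : 1 ≤ s)
    (w v : EuclideanSpace ℝ (Fin k)) :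
    (2 : ℝ) ^ (-s) * ‖w - v‖ ^ s ≤ ‖(‖w‖ ^ (s - 1)) • w - (‖v‖ ^ (s - 1)) • v‖ := by
  by_cases hwv : w = v
  · subst hwv
    simp [Real.zero_rpow (by linarith : s ≠ 0)]
  have hd : (0:ℝ) < ‖w - v‖ := by
    rw [norm_pos_iff]; exact sub_ne_zero.mpr hwv
  set a : ℝ := ‖w‖ ^ (s - 1) with ha
  set b : ℝ := ‖v‖ ^ (s - 1) with hb
  have ha0 : 0 ≤ a := Real.rpow_nonneg (norm_nonneg _) _
  have hb0 : 0 ≤ b := Real.rpow_nonneg (norm_nonneg _) _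
  -- expansion of the inner product
  have hexp : (inner ℝ (a • w - b • v) (w - v) : ℝ)
      = a * ‖w‖^2 + b * ‖v‖^2 - (a + b) * inner ℝ w v := by
    simp only [inner_sub_left, inner_sub_right, real_inner_smul_left,
      real_inner_self_eq_norm_sq, real_inner_comm v w]
    ring
  have hnormsq : ‖w - v‖^2 = ‖w‖^2 - 2 * inner ℝ w v + ‖v‖^2 :=
    norm_sub_sq_real w v
  -- monotonicity: (a - b)(‖w‖² - ‖v‖²) ≥ 0
  have hmono : 0 ≤ (a - b) * (‖w‖^2 - ‖v‖^2) := by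
    rcases le_total ‖w‖ ‖v‖ with h | h
    · have h1 : a ≤ b := Real.rpow_le_rpow (norm_nonneg _) h (by linarith)
      have h2 : ‖w‖^2 ≤ ‖v‖^2 := by
        have := mul_self_le_mul_self (norm_nonneg _) h
        nlinarith
      nlinarith
    · have h1 : b ≤ a := Real.rpow_le_rpow (norm_nonneg _) h (by linarith)
      have h2 : ‖v‖^2 ≤ ‖w‖^2 := by
        have := mul_self_le_mul_self (norm_nonneg _) h
        nlinarith
      exact mul_nonneg (by linarith) (by linarith)
  -- monotonicity inequality for the inner product
  have hinner : (a + b) / 2 * ‖w - v‖^2 ≤ inner ℝ (a • w - b • v) (w - v) := by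
    rw [hexp, hnormsq]; nlinarith
  -- lower bound (a+b)/2 ≥ 2^{-s} ‖w-v‖^{s-1}
  have hhalf : (2:ℝ)^(-s) * ‖w - v‖ ^ (s - 1) ≤ (a + b) / 2 := by
    have htri : ‖w - v‖ ≤ ‖w‖ + ‖v‖ := norm_sub_le w v
    have hmax : ‖w‖ + ‖v‖ ≤ 2 * max ‖w‖ ‖v‖ := by
      rcases le_total ‖w‖ ‖v‖ with h | h
      · simp [max_eq_right h]; linarith
      · simp [max_eq_left h]; linarith
    have hm0 : 0 ≤ max ‖w‖ ‖v‖ := le_max_of_le_left (norm_nonneg _)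
    have h1 : ‖w - v‖ ^ (s - 1) ≤ (2 * max ‖w‖ ‖v‖) ^ (s - 1) :=
      Real.rpow_le_rpow hd.le (le_trans htri hmax) (by linarith)
    have h2 : (2 * max ‖w‖ ‖v‖) ^ (s - 1) = 2 ^ (s - 1) * (max ‖w‖ ‖v‖) ^ (s - 1) :=
      Real.mul_rpow (by norm_num) hm0
    have h3 : (max ‖w‖ ‖v‖) ^ (s - 1) ≤ a + b := by
      rcases le_total ‖w‖ ‖v‖ with h | h
      · rw [max_eq_right h]; linarith
      · rw [max_eq_left h]; linarith
    have h2pos : (0:ℝ) < (2:ℝ) ^ (s - 1) := Real.rpow_pos_of_pos (by norm_num) _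
    have key : ‖w - v‖ ^ (s - 1) ≤ 2 ^ (s - 1) * (a + b) := by
      calc ‖w - v‖ ^ (s - 1) ≤ 2 ^ (s - 1) * (max ‖w‖ ‖v‖) ^ (s - 1) := by
            rw [← h2]; exact h1
        _ ≤ 2 ^ (s - 1) * (a + b) := by
            exact mul_le_mul_of_nonneg_left h3 h2pos.le
    have h2s : (2:ℝ) ^ (-s) * (2:ℝ) ^ (s - 1) = 1/2 := by
      rw [← Real.rpow_add (by norm_num : (0:ℝ) < 2),
        show (-s + (s-1)) = (-1 : ℝ) by ring, Real.rpow_neg_one]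
      norm_num
    have h2spos : (0:ℝ) < (2:ℝ) ^ (-s) := Real.rpow_pos_of_pos (by norm_num) _
    calc (2:ℝ)^(-s) * ‖w - v‖ ^ (s - 1)
        ≤ (2:ℝ)^(-s) * (2 ^ (s - 1) * (a + b)) :=
          mul_le_mul_of_nonneg_left key h2spos.le
      _ = ((2:ℝ)^(-s) * 2 ^ (s - 1)) * (a + b) := by ring
      _ = (a + b) / 2 := by rw [h2s]; ring
  -- combine
  have hCS : (inner ℝ (a • w - b • v) (w - v) : ℝ) ≤ ‖a • w - b • v‖ * ‖w - v‖ :=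
    real_inner_le_norm _ _
  have hds : ‖w - v‖ ^ s = ‖w - v‖ ^ (s - 1) * ‖w - v‖ := by
    rw [← Real.rpow_add_one hd.ne' (s - 1)]; ring_nf
  have hchain : (2:ℝ)^(-s) * ‖w - v‖ ^ s * ‖w - v‖ ≤ ‖a • w - b • v‖ * ‖w - v‖ := by
    have hdsq : ‖w - v‖^2 = ‖w - v‖ * ‖w - v‖ := sq ‖w - v‖ ▸ sq (‖w - v‖) ▸ by ring
    calc (2:ℝ)^(-s) * ‖w - v‖ ^ s * ‖w - v‖
        = ((2:ℝ)^(-s) * ‖w - v‖ ^ (s-1)) * ‖w - v‖^2 := by rw [hds]; ring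
      _ ≤ (a + b) / 2 * ‖w - v‖^2 :=
          mul_le_mul_of_nonneg_right hhalf (sq_nonneg _)
      _ ≤ inner ℝ (a • w - b • v) (w - v) := hinner
      _ ≤ ‖a • w - b • v‖ * ‖w - v‖ := hCS
  exact le_of_mul_le_mul_right hchain hd
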